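/- Let K ≥ 1 be an integer, let π_1,…,π_K ≥ 0 with ∑_{i=1}^K π_i = 1 and π_i = π_{K+1−i} for all 1 ≤ i ≤ K, and let λ > 0, μ > 0. For 1 ≤ i, j ≤ K write Φ(i,j) := ∫∫ φ(x − y) d(Gamma(i,λ))(x) d(Gamma(j,μ))(y). Then for every convex function φ : ℝ → ℝ such that (x,y) ↦ φ(x−y) is integrable with respect to Gamma(i,λ) ⊗ Gamma(j,μ) for all 1 ≤ i, j ≤ K: ∑_{i=1}^K ∑_{j=1}^K π_i π_j Φ(i,j) ≤ ∑_{i=1}^K π_i Φ(i, K+1−i). -/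

import Mathlib

open MeasureTheory ProbabilityTheory
open scoped ENNReal

lemma convex_increment {φ : ℝ → ℝ} (hconv : ConvexOn ℝ Set.univ φ)
    {a b e : ℝ} (hab : a ≤ b) (he : 0 ≤ e) :
    φ (a + e) + φ b ≤ φ a + φ (b + e) := by
  rcases eq_or_lt_of_le hab with rfl | hab
  · ring_nf; rfl
  rcases eq_or_lt_of_le he with rfl | he
  · ring_nf; rfl
  have hden : 0 < b + e - a := by linarith
  set θ : ℝ := e / (b + e - a) with hθ
  have hθ0 : 0 ≤ θ := by positivity
  have hθ1 : θ ≤ 1 := by rw [hθ, div_le_one hden]; linarith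
  have h1 : φ (a + e) ≤ (1 - θ) * φ a + θ * φ (b + e) := by
    have := hconv.2 (Set.mem_univ a) (Set.mem_univ (b + e)) (by linarith : (0:ℝ) ≤ 1 - θ) hθ0 (by ring)
    have harg : (1 - θ) • a + θ • (b + e) = a + e := by
      rw [smul_eq_mul, smul_eq_mul, hθ]; field_simp; ring
    rw [harg] at this
    simpa [smul_eq_mul] using this
  have h2 : φ b ≤ θ * φ a + (1 - θ) * φ (b + e) := by
    have := hconv.2 (Set.mem_univ a) (Set.mem_univ (b + e)) hθ0 (by linarith : (0:ℝ) ≤ 1 - θ) (by ring)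
    have harg : θ • a + (1 - θ) • (b + e) = b := by
      rw [smul_eq_mul, smul_eq_mul, hθ]; field_simp; ring
    rw [harg] at this
    simpa [smul_eq_mul] using this
  linarith

lemma gamma_ae_nonneg {a r : ℝ} : ∀ᵐ x ∂(gammaMeasure a r), 0 ≤ x := by
  rw [ae_iff]
  have : {x : ℝ | ¬ 0 ≤ x} = Set.Iio 0 := by ext x; simp
  rw [this, gammaMeasure, withDensity_apply _ measurableSet_Iio]
  simpa using lintegral_gammaPDF_of_nonpos (le_refl (0:ℝ)) (a := a) (r := r)

lemma gammaPDF_conv {l : ℝ} (hl : 0 < l) (n : ℕ) (hn : 1 ≤ n) :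
    ∀ᵐ z : ℝ, ∫⁻ x, gammaPDF (n : ℝ) l x * gammaPDF 1 l (z - x)
      = gammaPDF ((n + 1 : ℕ) : ℝ) l z := by
  have hn0 : (0:ℝ) < (n:ℝ) := by exact_mod_cast hn
  have hΓ : (0:ℝ) < Real.Gamma (n:ℝ) := Real.Gamma_pos_of_pos hn0
  have hz0 : ∀ᵐ z : ℝ, z ≠ 0 := by
    rw [ae_iff]
    simpa using (Real.volume_singleton (a := (0:ℝ)))
  filter_upwards [hz0] with z hz
  rcases lt_or_gt_of_ne hz with hzneg | hzpos
  · have hzero : ∀ x : ℝ, gammaPDF (n:ℝ) l x * gammaPDF 1 l (z - x) = 0 := by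
      intro x
      rcases lt_or_ge x 0 with h | h
      · rw [gammaPDF_of_neg h, zero_mul]
      · rw [gammaPDF_of_neg (by linarith : z - x < 0), mul_zero]
    simp only [hzero, lintegral_zero]
    rw [gammaPDF_of_neg hzneg]
  · -- z > 0
    set e : ℝ := (n:ℝ) - 1 with he
    set C : ℝ := l ^ (n:ℝ) * l * Real.exp (-(l * z)) / Real.Gamma (n:ℝ) with hC
    have hCnn : 0 ≤ C := by positivity
    have hae : (fun x : ℝ => gammaPDF (n:ℝ) l x * gammaPDF 1 l (z - x))
        =ᵐ[volume] (Set.Ioo 0 z).indicator (fun x => ENNReal.ofReal (C * x ^ e)) := by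
      have hnull : ∀ᵐ x : ℝ, x ≠ 0 ∧ x ≠ z := by
        rw [ae_iff]
        have : {x : ℝ | ¬(x ≠ 0 ∧ x ≠ z)} ⊆ {0} ∪ {z} := by
          intro x hx
          simp only [Set.mem_setOf_eq, not_and_or, not_not] at hx
          rcases hx with rfl | rfl <;> simp
        refine measure_mono_null this
          (measure_union_null Real.volume_singleton Real.volume_singleton)
      filter_upwards [hnull] with x ⟨hx0, hxz⟩
      by_cases hmem : x ∈ Set.Ioo 0 z
      · rw [Set.indicator_of_mem hmem]
        obtain ⟨hx1, hx2⟩ := hmem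
        rw [gammaPDF_of_nonneg hx1.le, gammaPDF_of_nonneg (by linarith : (0:ℝ) ≤ z - x),
          ← ENNReal.ofReal_mul (by positivity)]
        congr 1
        have hexp : Real.exp (-(l * x)) * Real.exp (-(l * (z - x))) = Real.exp (-(l * z)) := by
          rw [← Real.exp_add]; ring_nf
        have h11 : (1:ℝ) - 1 = 0 := by norm_num
        rw [Real.Gamma_one, h11, Real.rpow_zero, Real.rpow_one]
        calc l ^ (n:ℝ) / Real.Gamma (n:ℝ) * x ^ e * Real.exp (-(l * x)) *
              (l / 1 * 1 * Real.exp (-(l * (z - x))))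
            = l ^ (n:ℝ) * l * (Real.exp (-(l * x)) * Real.exp (-(l * (z - x)))) /
              Real.Gamma (n:ℝ) * x ^ e := by ring
          _ = C * x ^ e := by rw [hexp, hC]
      · rw [Set.indicator_of_notMem hmem]
        simp only [Set.mem_Ioo, not_and_or, not_lt] at hmem
        rcases hmem with h | h
        · have hxneg : x < 0 := lt_of_le_of_ne h hx0
          rw [gammaPDF_of_neg hxneg, zero_mul]
        · have hxz' : z < x := lt_of_le_of_ne h (Ne.symm hxz)
          rw [gammaPDF_of_neg (by linarith : z - x < 0), mul_zero]
    rw [lintegral_congr_ae hae, lintegral_indicator measurableSet_Ioo]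
    have hre : ∀ x : ℝ, ENNReal.ofReal (C * x ^ e) =
        ENNReal.ofReal C * ENNReal.ofReal (x ^ e) := fun x =>
      ENNReal.ofReal_mul hCnn
    simp only [hre]
    rw [lintegral_const_mul' _ _ ENNReal.ofReal_ne_top]
    have he1 : (-1:ℝ) < e := by rw [he]; push_cast; linarith [hn0]
    have hint : IntegrableOn (fun x : ℝ => x ^ e) (Set.Ioo 0 z) := by
      have := (intervalIntegral.intervalIntegrable_rpow' (a := (0:ℝ)) (b := z) he1)
      exact this.1.mono_set Set.Ioo_subset_Ioc_self
    rw [← ofReal_integral_eq_lintegral_ofReal hint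
      ((ae_restrict_iff' measurableSet_Ioo).mpr
        (ae_of_all _ fun x hx => Real.rpow_nonneg hx.1.le _))]
    have hval : ∫ x in Set.Ioo 0 z, x ^ e = z ^ (n:ℝ) / (n:ℝ) := by
      rw [← MeasureTheory.integral_Ioc_eq_integral_Ioo,
        ← intervalIntegral.integral_of_le hzpos.le,
        integral_rpow (Or.inl he1)]
      have h1 : e + 1 = (n:ℝ) := by rw [he]; ring
      rw [h1, Real.zero_rpow (by positivity), sub_zero]
    rw [hval, gammaPDF_of_nonneg hzpos.le, ← ENNReal.ofReal_mul hCnn]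
    congr 1
    have hcast : ((n + 1 : ℕ) : ℝ) = (n:ℝ) + 1 := by push_cast; ring
    rw [hcast]
    rw [Real.Gamma_add_one hn0.ne', Real.rpow_add_one hl.ne' (n:ℝ)]
    have : (n:ℝ) + 1 - 1 = (n:ℝ) := by ring
    rw [this, hC]
    field_simp

lemma gamma_conv {l : ℝ} (hl : 0 < l) (n : ℕ) (hn : 1 ≤ n) :
    ((gammaMeasure (n:ℝ) l).prod (gammaMeasure (1:ℝ) l)).map (fun p : ℝ × ℝ => p.1 + p.2)
      = gammaMeasure ((n + 1 : ℕ) : ℝ) l := by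
  have hn0 : (0:ℝ) < (n:ℝ) := by exact_mod_cast hn
  haveI := isProbabilityMeasure_gammaMeasure hn0 hl
  haveI := isProbabilityMeasure_gammaMeasure (one_pos (α := ℝ)) hl
  have hPn : Measurable (gammaPDF (n:ℝ) l) := (measurable_gammaPDFReal _ _).ennreal_ofReal
  have hP1 : Measurable (gammaPDF (1:ℝ) l) := (measurable_gammaPDFReal _ _).ennreal_ofReal
  have hPm : Measurable (gammaPDF ((n+1:ℕ):ℝ) l) := (measurable_gammaPDFReal _ _).ennreal_ofReal
  have key : ∀ f : ℝ → ℝ≥0∞, Measurable f →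
      ∫⁻ p : ℝ × ℝ, f (p.1 + p.2) ∂((gammaMeasure (n:ℝ) l).prod (gammaMeasure (1:ℝ) l))
        = ∫⁻ z, f z ∂(gammaMeasure ((n+1:ℕ):ℝ) l) := by
    intro f hf
    calc ∫⁻ p : ℝ × ℝ, f (p.1 + p.2) ∂((gammaMeasure (n:ℝ) l).prod (gammaMeasure (1:ℝ) l))
        = ∫⁻ x, ∫⁻ y, f (x + y) ∂(gammaMeasure (1:ℝ) l) ∂(gammaMeasure (n:ℝ) l) :=
          lintegral_prod _ ((hf.comp measurable_add).aemeasurable)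
      _ = ∫⁻ x, (∫⁻ y, gammaPDF (1:ℝ) l y * f (x + y) ∂volume) ∂(gammaMeasure (n:ℝ) l) := by
          refine lintegral_congr fun x => ?_
          exact lintegral_withDensity_eq_lintegral_mul volume hP1
            (hf.comp (measurable_const_add x))
      _ = ∫⁻ x, (∫⁻ z, gammaPDF (1:ℝ) l (z - x) * f z ∂volume) ∂(gammaMeasure (n:ℝ) l) := by
          refine lintegral_congr fun x => ?_
          have h := lintegral_add_left_eq_self
            (μ := (volume : Measure ℝ)) (fun z => gammaPDF (1:ℝ) l (z - x) * f z) x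
          calc ∫⁻ y, gammaPDF (1:ℝ) l y * f (x + y) ∂volume
              = ∫⁻ y, gammaPDF (1:ℝ) l (x + y - x) * f (x + y) ∂volume := by
                simp only [add_sub_cancel_left]
            _ = ∫⁻ z, gammaPDF (1:ℝ) l (z - x) * f z ∂volume := h
      _ = ∫⁻ x, gammaPDF (n:ℝ) l x * ∫⁻ z, gammaPDF (1:ℝ) l (z - x) * f z ∂volume ∂volume :=
          lintegral_withDensity_eq_lintegral_mul volume hPn
            (Measurable.lintegral_prod_right'
              (f := fun q : ℝ × ℝ => gammaPDF (1:ℝ) l (q.2 - q.1) * f q.2)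
              ((hP1.comp (measurable_snd.sub measurable_fst)).mul (hf.comp measurable_snd)))
      _ = ∫⁻ x, ∫⁻ z, gammaPDF (n:ℝ) l x * (gammaPDF (1:ℝ) l (z - x) * f z) ∂volume ∂volume := by
          refine lintegral_congr fun x => ?_
          exact (lintegral_const_mul' _ _ ENNReal.ofReal_ne_top).symm
      _ = ∫⁻ z, ∫⁻ x, gammaPDF (n:ℝ) l x * (gammaPDF (1:ℝ) l (z - x) * f z) ∂volume ∂volume := by
          refine lintegral_lintegral_swap ?_
          exact ((hPn.comp measurable_fst).mul
            ((hP1.comp (measurable_snd.sub measurable_fst)).mul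
              (hf.comp measurable_snd))).aemeasurable
      _ = ∫⁻ z, (∫⁻ x, gammaPDF (n:ℝ) l x * gammaPDF (1:ℝ) l (z - x) ∂volume) * f z ∂volume := by
          refine lintegral_congr fun z => ?_
          simp_rw [← mul_assoc]
          exact lintegral_mul_const _ (hPn.mul (hP1.comp (measurable_const.sub measurable_id)))
      _ = ∫⁻ z, gammaPDF ((n+1:ℕ):ℝ) l z * f z ∂volume := by
          refine lintegral_congr_ae ?_
          filter_upwards [gammaPDF_conv hl n hn] with z hz
          rw [hz]
      _ = ∫⁻ z, f z ∂(gammaMeasure ((n+1:ℕ):ℝ) l) :=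
          (lintegral_withDensity_eq_lintegral_mul volume hPm hf).symm
  ext s hs
  rw [Measure.map_apply measurable_add hs]
  have h1 := key (s.indicator 1) (measurable_one.indicator hs)
  rw [← lintegral_indicator_one hs, ← h1,
    ← lintegral_indicator_one (measurable_add hs :
      MeasurableSet ((fun p : ℝ × ℝ => p.1 + p.2) ⁻¹' s))]
  exact lintegral_congr fun p => rfl

lemma Phi_step {lam mu : ℝ} (hlam : 0 < lam) (hmu : 0 < mu) {φ : ℝ → ℝ}
    (hφc : Continuous φ) (hconv : ConvexOn ℝ Set.univ φ) (s t : ℕ) (hs : 1 ≤ s) (ht : 1 ≤ t)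
    (h00 : Integrable (fun p : ℝ × ℝ => φ (p.1 - p.2))
      ((gammaMeasure (s:ℝ) lam).prod (gammaMeasure (t:ℝ) mu)))
    (h01 : Integrable (fun p : ℝ × ℝ => φ (p.1 - p.2))
      ((gammaMeasure (s:ℝ) lam).prod (gammaMeasure ((t+1:ℕ):ℝ) mu)))
    (h10 : Integrable (fun p : ℝ × ℝ => φ (p.1 - p.2))
      ((gammaMeasure ((s+1:ℕ):ℝ) lam).prod (gammaMeasure (t:ℝ) mu)))
    (h11 : Integrable (fun p : ℝ × ℝ => φ (p.1 - p.2))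
      ((gammaMeasure ((s+1:ℕ):ℝ) lam).prod (gammaMeasure ((t+1:ℕ):ℝ) mu))) :
    (∫ p : ℝ × ℝ, φ (p.1 - p.2) ∂((gammaMeasure (s:ℝ) lam).prod (gammaMeasure (t:ℝ) mu)))
      + (∫ p : ℝ × ℝ, φ (p.1 - p.2)
          ∂((gammaMeasure ((s+1:ℕ):ℝ) lam).prod (gammaMeasure ((t+1:ℕ):ℝ) mu)))
    ≤ (∫ p : ℝ × ℝ, φ (p.1 - p.2)
          ∂((gammaMeasure (s:ℝ) lam).prod (gammaMeasure ((t+1:ℕ):ℝ) mu)))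
      + (∫ p : ℝ × ℝ, φ (p.1 - p.2)
          ∂((gammaMeasure ((s+1:ℕ):ℝ) lam).prod (gammaMeasure (t:ℝ) mu))) := by
  have hs0 : (0:ℝ) < (s:ℝ) := by exact_mod_cast hs
  have ht0 : (0:ℝ) < (t:ℝ) := by exact_mod_cast ht
  have hs10 : (0:ℝ) < ((s+1:ℕ):ℝ) := by positivity
  have ht10 : (0:ℝ) < ((t+1:ℕ):ℝ) := by positivity
  haveI : IsProbabilityMeasure (gammaMeasure (s:ℝ) lam) := isProbabilityMeasure_gammaMeasure hs0 hlam
  haveI : IsProbabilityMeasure (gammaMeasure (1:ℝ) lam) := isProbabilityMeasure_gammaMeasure one_pos hlam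
  haveI : IsProbabilityMeasure (gammaMeasure (t:ℝ) mu) := isProbabilityMeasure_gammaMeasure ht0 hmu
  haveI : IsProbabilityMeasure (gammaMeasure (1:ℝ) mu) := isProbabilityMeasure_gammaMeasure one_pos hmu
  haveI : IsProbabilityMeasure (gammaMeasure ((s+1:ℕ):ℝ) lam) :=
    isProbabilityMeasure_gammaMeasure hs10 hlam
  haveI : IsProbabilityMeasure (gammaMeasure ((t+1:ℕ):ℝ) mu) :=
    isProbabilityMeasure_gammaMeasure ht10 hmu
  set A : Measure ℝ := gammaMeasure (s:ℝ) lam with hA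
  set EA : Measure ℝ := gammaMeasure (1:ℝ) lam with hEA
  set B : Measure ℝ := gammaMeasure (t:ℝ) mu with hB
  set EB : Measure ℝ := gammaMeasure (1:ℝ) mu with hEB
  set Ω : Measure ((ℝ × ℝ) × (ℝ × ℝ)) := (A.prod EA).prod (B.prod EB) with hΩ
  have hf : Continuous (fun p : ℝ × ℝ => φ (p.1 - p.2)) :=
    hφc.comp (continuous_fst.sub continuous_snd)
  have hadd : Measurable (fun p : ℝ × ℝ => p.1 + p.2) := measurable_add
  have hfst : Measurable (Prod.fst : ℝ × ℝ → ℝ) := measurable_fst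
  have m00 : Ω.map (Prod.map (Prod.fst : ℝ×ℝ→ℝ) (Prod.fst : ℝ×ℝ→ℝ)) = A.prod B := by
    rw [hΩ, ← Measure.map_prod_map _ _ hfst hfst]
    simp
  have m10 : Ω.map (Prod.map (fun p : ℝ × ℝ => p.1 + p.2) (Prod.fst : ℝ×ℝ→ℝ))
      = (gammaMeasure ((s+1:ℕ):ℝ) lam).prod B := by
    rw [hΩ, ← Measure.map_prod_map _ _ hadd hfst, hA, hEA, gamma_conv hlam s hs]
    simp
  have m01 : Ω.map (Prod.map (Prod.fst : ℝ×ℝ→ℝ) (fun p : ℝ × ℝ => p.1 + p.2))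
      = A.prod (gammaMeasure ((t+1:ℕ):ℝ) mu) := by
    rw [hΩ, ← Measure.map_prod_map _ _ hfst hadd, hB, hEB, gamma_conv hmu t ht]
    simp
  have m11 : Ω.map (Prod.map (fun p : ℝ × ℝ => p.1 + p.2) (fun p : ℝ × ℝ => p.1 + p.2))
      = (gammaMeasure ((s+1:ℕ):ℝ) lam).prod (gammaMeasure ((t+1:ℕ):ℝ) mu) := by
    rw [hΩ, ← Measure.map_prod_map _ _ hadd hadd, hA, hEA, hB, hEB,
      gamma_conv hlam s hs, gamma_conv hmu t ht]
  have hg00 : Measurable (Prod.map (Prod.fst : ℝ×ℝ→ℝ) (Prod.fst : ℝ×ℝ→ℝ)) :=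
    hfst.prodMap hfst
  have hg10 : Measurable (Prod.map (fun p : ℝ × ℝ => p.1 + p.2) (Prod.fst : ℝ×ℝ→ℝ)) :=
    hadd.prodMap hfst
  have hg01 : Measurable (Prod.map (Prod.fst : ℝ×ℝ→ℝ) (fun p : ℝ × ℝ => p.1 + p.2)) :=
    hfst.prodMap hadd
  have hg11 : Measurable (Prod.map (fun p : ℝ × ℝ => p.1 + p.2)
      (fun p : ℝ × ℝ => p.1 + p.2)) := hadd.prodMap hadd
  have e00 : (∫ p : ℝ × ℝ, φ (p.1 - p.2) ∂(A.prod B))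
      = ∫ q : (ℝ × ℝ) × (ℝ × ℝ), φ (q.1.1 - q.2.1) ∂Ω := by
    rw [← m00, integral_map hg00.aemeasurable hf.aestronglyMeasurable]
    simp only [Prod.map_fst, Prod.map_snd]
  have e10 : (∫ p : ℝ × ℝ, φ (p.1 - p.2) ∂((gammaMeasure ((s+1:ℕ):ℝ) lam).prod B))
      = ∫ q : (ℝ × ℝ) × (ℝ × ℝ), φ (q.1.1 + q.1.2 - q.2.1) ∂Ω := by
    rw [← m10, integral_map hg10.aemeasurable hf.aestronglyMeasurable]
    simp only [Prod.map_fst, Prod.map_snd]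
  have e01 : (∫ p : ℝ × ℝ, φ (p.1 - p.2) ∂(A.prod (gammaMeasure ((t+1:ℕ):ℝ) mu)))
      = ∫ q : (ℝ × ℝ) × (ℝ × ℝ), φ (q.1.1 - (q.2.1 + q.2.2)) ∂Ω := by
    rw [← m01, integral_map hg01.aemeasurable hf.aestronglyMeasurable]
    simp only [Prod.map_fst, Prod.map_snd]
  have e11 : (∫ p : ℝ × ℝ, φ (p.1 - p.2)
        ∂((gammaMeasure ((s+1:ℕ):ℝ) lam).prod (gammaMeasure ((t+1:ℕ):ℝ) mu)))
      = ∫ q : (ℝ × ℝ) × (ℝ × ℝ), φ (q.1.1 + q.1.2 - (q.2.1 + q.2.2)) ∂Ω := by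
    rw [← m11, integral_map hg11.aemeasurable hf.aestronglyMeasurable]
    simp only [Prod.map_fst, Prod.map_snd]
  have I00 : Integrable (fun q : (ℝ × ℝ) × (ℝ × ℝ) => φ (q.1.1 - q.2.1)) Ω := by
    have h := (integrable_map_measure hf.aestronglyMeasurable hg00.aemeasurable).mp
      (m00 ▸ h00)
    exact h
  have I10 : Integrable (fun q : (ℝ × ℝ) × (ℝ × ℝ) => φ (q.1.1 + q.1.2 - q.2.1)) Ω := by
    have h := (integrable_map_measure hf.aestronglyMeasurable hg10.aemeasurable).mp
      (m10 ▸ h10)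
    exact h
  have I01 : Integrable (fun q : (ℝ × ℝ) × (ℝ × ℝ) => φ (q.1.1 - (q.2.1 + q.2.2))) Ω := by
    have h := (integrable_map_measure hf.aestronglyMeasurable hg01.aemeasurable).mp
      (m01 ▸ h01)
    exact h
  have I11 : Integrable (fun q : (ℝ × ℝ) × (ℝ × ℝ) => φ (q.1.1 + q.1.2 - (q.2.1 + q.2.2))) Ω := by
    have h := (integrable_map_measure hf.aestronglyMeasurable hg11.aemeasurable).mp
      (m11 ▸ h11)
    exact h
  have hu : ∀ᵐ q : (ℝ × ℝ) × (ℝ × ℝ) ∂Ω, 0 ≤ q.1.2 := by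
    rw [hΩ, ae_iff]
    have hset : {q : (ℝ × ℝ) × (ℝ × ℝ) | ¬ 0 ≤ q.1.2}
        = (Set.univ ×ˢ Set.Iio 0) ×ˢ (Set.univ : Set (ℝ × ℝ)) := by
      ext q; simp [not_le]
    rw [hset, Measure.prod_prod, Measure.prod_prod]
    have hE : EA (Set.Iio 0) = 0 := by
      rw [hEA, gammaMeasure, withDensity_apply _ measurableSet_Iio]
      exact lintegral_gammaPDF_of_nonpos le_rfl
    rw [hE]; simp
  have hv : ∀ᵐ q : (ℝ × ℝ) × (ℝ × ℝ) ∂Ω, 0 ≤ q.2.2 := by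
    rw [hΩ, ae_iff]
    have hset : {q : (ℝ × ℝ) × (ℝ × ℝ) | ¬ 0 ≤ q.2.2}
        = (Set.univ : Set (ℝ × ℝ)) ×ˢ (Set.univ ×ˢ Set.Iio 0) := by
      ext q; simp [not_le]
    rw [hset, Measure.prod_prod, Measure.prod_prod]
    have hE : EB (Set.Iio 0) = 0 := by
      rw [hEB, gammaMeasure, withDensity_apply _ measurableSet_Iio]
      exact lintegral_gammaPDF_of_nonpos le_rfl
    rw [hE]; simp
  rw [e00, e01, e10, e11, ← integral_add I00 I11, ← integral_add I01 I10]
  refine integral_mono_ae (I00.add I11) (I01.add I10) ?_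
  filter_upwards [hu, hv] with q h1 h2
  have key := convex_increment hconv
    (show q.1.1 - q.2.1 - q.2.2 ≤ q.1.1 - q.2.1 by linarith) h1
  have r1 : q.1.1 + q.1.2 - (q.2.1 + q.2.2) = q.1.1 - q.2.1 - q.2.2 + q.1.2 := by ring
  have r2 : q.1.1 - (q.2.1 + q.2.2) = q.1.1 - q.2.1 - q.2.2 := by ring
  have r3 : q.1.1 + q.1.2 - q.2.1 = q.1.1 - q.2.1 + q.1.2 := by ring
  rw [r1, r2, r3]
  linarith [key]

/-- Convex-order inequality `D₀ ≼_cx D₋` for a symmetric mixing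
distribution `π`: the `π ⊗ π`-average of `Φ(i,j)` is at most the `π`-average along the
anti-diagonal `Φ(i, K+1-i)`, where
`Φ(i,j) = ∫∫ φ(x - y) dErlang(i,λ)(x) dErlang(j,μ)(y)`. -/
theorem negatively_correlated_convex_order
    (K : ℕ) (hK : 1 ≤ K) (pr : ℕ → ℝ)
    (hpr : ∀ i ∈ Finset.Icc 1 K, 0 ≤ pr i)
    (hprsum : ∑ i ∈ Finset.Icc 1 K, pr i = 1)
    (hprsymm : ∀ i ∈ Finset.Icc 1 K, pr i = pr (K + 1 - i))
    (lam mu : ℝ) (hlam : 0 < lam) (hmu : 0 < mu)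
    (φ : ℝ → ℝ) (hconv : ConvexOn ℝ Set.univ φ)
    (hint : ∀ i ∈ Finset.Icc 1 K, ∀ j ∈ Finset.Icc 1 K,
      Integrable (fun p : ℝ × ℝ => φ (p.1 - p.2))
        ((gammaMeasure (i : ℝ) lam).prod (gammaMeasure (j : ℝ) mu))) :
    ∑ i ∈ Finset.Icc 1 K, ∑ j ∈ Finset.Icc 1 K, pr i * pr j *
        ∫ p : ℝ × ℝ, φ (p.1 - p.2) ∂((gammaMeasure (i : ℝ) lam).prod (gammaMeasure (j : ℝ) mu)) ≤
      ∑ i ∈ Finset.Icc 1 K, pr i *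
        ∫ p : ℝ × ℝ, φ (p.1 - p.2)
          ∂((gammaMeasure (i : ℝ) lam).prod (gammaMeasure ((K + 1 - i : ℕ) : ℝ) mu)) := by
  have hφc : Continuous φ := by
    have h := hconv.continuousOn isOpen_univ
    rw [← continuousOn_univ]
    exact h
  set T := Finset.Icc 1 K with hT
  set Φ : ℕ → ℕ → ℝ := fun i j => ∫ p : ℝ × ℝ, φ (p.1 - p.2)
    ∂((gammaMeasure (i : ℝ) lam).prod (gammaMeasure (j : ℝ) mu)) with hΦ
  have hmem : ∀ i, i ∈ T ↔ 1 ≤ i ∧ i ≤ K := fun i => Finset.mem_Icc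
  -- unit step
  have step : ∀ s t : ℕ, 1 ≤ s → s + 1 ≤ K → 1 ≤ t → t + 1 ≤ K →
      Φ s t + Φ (s+1) (t+1) ≤ Φ s (t+1) + Φ (s+1) t := by
    intro s t hs hsK ht htK
    exact Phi_step hlam hmu hφc hconv s t hs ht
      (hint s ((hmem s).mpr ⟨hs, by omega⟩) t ((hmem t).mpr ⟨ht, by omega⟩))
      (hint s ((hmem s).mpr ⟨hs, by omega⟩) (t+1) ((hmem (t+1)).mpr ⟨by omega, htK⟩))
      (hint (s+1) ((hmem (s+1)).mpr ⟨by omega, hsK⟩) t ((hmem t).mpr ⟨ht, by omega⟩))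
      (hint (s+1) ((hmem (s+1)).mpr ⟨by omega, hsK⟩) (t+1) ((hmem (t+1)).mpr ⟨by omega, htK⟩))
  -- telescope in the first variable
  have row : ∀ i, 1 ≤ i → ∀ t, 1 ≤ t → t + 1 ≤ K → ∀ j, i ≤ j → j ≤ K →
      Φ i t + Φ j (t+1) ≤ Φ i (t+1) + Φ j t := by
    intro i hi t ht htK
    refine Nat.le_induction ?_ ?_
    · intro _; linarith
    · intro j hij IH hjK
      have h1 := IH (by omega)
      have h2 := step j t (by omega) (by omega) ht htK
      linarith
  -- telescope in the second variable
  have rect : ∀ i j, 1 ≤ i → i ≤ j → j ≤ K → ∀ m n, 1 ≤ m → m ≤ n → n ≤ K →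
      Φ i m + Φ j n ≤ Φ i n + Φ j m := by
    intro i j hi hij hjK m n h1m hmn
    induction n, hmn using Nat.le_induction with
    | base => intro _; linarith
    | succ n hmn IH =>
      intro hnK
      have h1 := IH (by omega)
      have h2 := row i hi n (by omega) (by omega) j hij hjK
      linarith
  -- key pairwise inequality
  have key : ∀ i ∈ T, ∀ j ∈ T,
      Φ i (K + 1 - j) + Φ j (K + 1 - i) ≤ Φ i (K + 1 - i) + Φ j (K + 1 - j) := by
    intro i hi j hj
    rw [hmem] at hi hj
    rcases le_total i j with h | h
    · have := rect i j hi.1 h hj.2 (K + 1 - j) (K + 1 - i) (by omega) (by omega) (by omega)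
      linarith
    · have := rect j i hj.1 h hi.2 (K + 1 - i) (K + 1 - j) (by omega) (by omega) (by omega)
      linarith
  -- rewrite RHS as double sum
  have hR : ∑ i ∈ T, pr i * Φ i (K + 1 - i)
      = ∑ i ∈ T, ∑ j ∈ T, pr i * pr j * Φ i (K + 1 - i) := by
    refine Finset.sum_congr rfl fun i hi => ?_
    calc pr i * Φ i (K + 1 - i) = (pr i * Φ i (K + 1 - i)) * ∑ j ∈ T, pr j := by
          rw [hprsum, mul_one]
      _ = ∑ j ∈ T, pr i * pr j * Φ i (K + 1 - i) := by
          rw [Finset.mul_sum]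
          exact Finset.sum_congr rfl fun j _ => by ring
  -- rewrite LHS using symmetry of pr
  have hL : ∀ i ∈ T, ∑ j ∈ T, pr i * pr j * Φ i j
      = ∑ j ∈ T, pr i * pr j * Φ i (K + 1 - j) := by
    intro i hi
    refine Finset.sum_nbij' (fun j => K + 1 - j) (fun j => K + 1 - j) ?_ ?_ ?_ ?_ ?_
    · intro j hj; rw [hmem] at hj; simp only [hmem]; omega
    · intro j hj; rw [hmem] at hj; simp only [hmem]; omega
    · intro j hj; rw [hmem] at hj; omega
    · intro j hj; rw [hmem] at hj; omega
    · intro j hj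
      have h1 : K + 1 - (K + 1 - j) = j := by rw [hmem] at hj; omega
      rw [h1, ← hprsymm j hj]
  have hL' : ∑ i ∈ T, ∑ j ∈ T, pr i * pr j * Φ i j
      = ∑ i ∈ T, ∑ j ∈ T, pr i * pr j * Φ i (K + 1 - j) :=
    Finset.sum_congr rfl hL
  rw [hL', hR]
  -- symmetrize
  have hswapL : ∑ i ∈ T, ∑ j ∈ T, pr i * pr j * Φ i (K + 1 - j)
      = ∑ i ∈ T, ∑ j ∈ T, pr j * pr i * Φ j (K + 1 - i) := Finset.sum_comm
  have hswapR : ∑ i ∈ T, ∑ j ∈ T, pr i * pr j * Φ i (K + 1 - i)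
      = ∑ i ∈ T, ∑ j ∈ T, pr j * pr i * Φ j (K + 1 - j) := Finset.sum_comm
  have hmain : ∑ i ∈ T, ∑ j ∈ T,
        (pr i * pr j * Φ i (K + 1 - j) + pr j * pr i * Φ j (K + 1 - i))
      ≤ ∑ i ∈ T, ∑ j ∈ T,
        (pr i * pr j * Φ i (K + 1 - i) + pr j * pr i * Φ j (K + 1 - j)) := by
    refine Finset.sum_le_sum fun i hi => Finset.sum_le_sum fun j hj => ?_
    have hk := key i hi j hj
    have hnn : 0 ≤ pr i * pr j := mul_nonneg (hpr i hi) (hpr j hj)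
    nlinarith [mul_le_mul_of_nonneg_left hk hnn]
  have hsplit1 : ∑ i ∈ T, ∑ j ∈ T,
        (pr i * pr j * Φ i (K + 1 - j) + pr j * pr i * Φ j (K + 1 - i))
      = (∑ i ∈ T, ∑ j ∈ T, pr i * pr j * Φ i (K + 1 - j))
        + ∑ i ∈ T, ∑ j ∈ T, pr j * pr i * Φ j (K + 1 - i) := by
    simp [Finset.sum_add_distrib]
  have hsplit2 : ∑ i ∈ T, ∑ j ∈ T,
        (pr i * pr j * Φ i (K + 1 - i) + pr j * pr i * Φ j (K + 1 - j))
      = (∑ i ∈ T, ∑ j ∈ T, pr i * pr j * Φ i (K + 1 - i))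
        + ∑ i ∈ T, ∑ j ∈ T, pr j * pr i * Φ j (K + 1 - j) := by
    simp [Finset.sum_add_distrib]
  rw [hsplit1, hsplit2, ← hswapL, ← hswapR] at hmain
  linarith
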